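/- Let X = [x_1,…,x_n] ∈ ℝ^{d×n} be a deterministic matrix whose columns satisfy L ≤ ‖x_t‖₂² ≤ U for all t = 1,…,n, for some 0 < L ≤ U < ∞. Define A^rms := RMSNorm(X) to be the matrix with columns a_t := √d · x_t/‖x_t‖₂. Then st(A^rms) ≤ (U/L) · st(X). -/

import Mathlib

noncomputable section

/-- Squared Frobenius norm of a real matrix. -/
def frobSq {m n : Type*} [Fintype m] [Fintype n] (A : Matrix m n ℝ) : ℝ :=
  ∑ i, ∑ j, (A i j) ^ 2

/-- Spectral (largest-singular-value) norm of a real matrix. -/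
def opNorm {m n : Type*} [Fintype m] [Fintype n] [DecidableEq n] (A : Matrix m n ℝ) : ℝ :=
  ‖LinearMap.toContinuousLinearMap (Matrix.toEuclideanLin A)‖

/-- Stable rank `st(A) = ‖A‖_F² / ‖A‖_op²`. -/
def stRank {m n : Type*} [Fintype m] [Fintype n] [DecidableEq n] (A : Matrix m n ℝ) : ℝ :=
  frobSq A / (opNorm A) ^ 2

lemma euclid_apply {d n : ℕ} (A : Matrix (Fin d) (Fin n) ℝ) (v : EuclideanSpace ℝ (Fin n))
    (i : Fin d) :
    (LinearMap.toContinuousLinearMap (Matrix.toEuclideanLin A)) v i = ∑ t, A i t * v t := by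
  simp [Matrix.toEuclideanLin_apply, Matrix.mulVec, dotProduct]

lemma euclid_norm {n : ℕ} (v : EuclideanSpace ℝ (Fin n)) :
    ‖v‖ = Real.sqrt (∑ t, (v t)^2) := by
  rw [EuclideanSpace.norm_eq]; simp [Real.norm_eq_abs, sq_abs]

set_option maxHeartbeats 1000000 in
/-- RMSNorm propagation of the stable rank: if the columns of `X` satisfy
`L ≤ ‖x_t‖₂² ≤ U`, then the RMS-normalized matrix `A^rms` (columns `√d · x_t/‖x_t‖₂`)
satisfies `st(A^rms) ≤ (U/L)·st(X)`. -/
theorem rmsnorm_stable_rank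
    (d n : ℕ)
    (X : Matrix (Fin d) (Fin n) ℝ)
    (L U : ℝ) (hL : 0 < L) (hLU : L ≤ U)
    (hcol : ∀ t, L ≤ ∑ i, (X i t) ^ 2 ∧ ∑ i, (X i t) ^ 2 ≤ U)
    (Arms : Matrix (Fin d) (Fin n) ℝ)
    (hArms : ∀ i t, Arms i t = Real.sqrt d * X i t / Real.sqrt (∑ i', (X i' t) ^ 2)) :
    stRank Arms ≤ (U / L) * stRank X := by
  classical
  set S : Fin n → ℝ := fun t => ∑ i, (X i t) ^ 2 with hSdef
  have hSL : ∀ t, L ≤ S t := fun t => (hcol t).1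
  have hSU : ∀ t, S t ≤ U := fun t => (hcol t).2
  have hSpos : ∀ t, 0 < S t := fun t => lt_of_lt_of_le hL (hSL t)
  have hU : 0 < U := lt_of_lt_of_le hL hLU
  rcases Nat.eq_zero_or_pos n with hn | hn
  · subst hn
    have h1 : frobSq Arms = 0 := by simp [frobSq]
    have h2 : frobSq X = 0 := by simp [frobSq]
    rw [stRank, stRank, h1, h2, zero_div, zero_div, mul_zero]
  -- d > 0
  have hd : (0:ℝ) < d := by
    rcases Nat.eq_zero_or_pos d with h0 | h0
    · exfalso
      have h := hSpos ⟨0, hn⟩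
      rw [hSdef] at h
      subst h0
      simp at h
    · exact_mod_cast h0
  set t0 : Fin n := ⟨0, hn⟩
  -- Frobenius norm of Arms
  have hFrobA : frobSq Arms = (d : ℝ) * n := by
    rw [frobSq, Finset.sum_comm]
    have hcolA : ∀ t : Fin n, ∑ i, (Arms i t) ^ 2 = (d : ℝ) := by
      intro t
      have h1 : ∀ i, (Arms i t) ^ 2 = (d : ℝ) * (X i t) ^ 2 / S t := by
        intro i
        rw [hArms, div_pow, mul_pow, Real.sq_sqrt (Nat.cast_nonneg d),
          Real.sq_sqrt (hSpos t).le]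
      calc ∑ i, (Arms i t) ^ 2 = ∑ i, (d : ℝ) * (X i t) ^ 2 / S t := by
            exact Finset.sum_congr rfl fun i _ => h1 i
        _ = (d : ℝ) * S t / S t := by
            rw [← Finset.sum_div, ← Finset.mul_sum]
        _ = (d : ℝ) := by rw [mul_div_assoc, div_self (hSpos t).ne', mul_one]
    rw [Finset.sum_congr rfl fun t _ => hcolA t]
    simp [mul_comm]
  -- Frobenius norm of X lower bound
  have hFrobX : (n : ℝ) * L ≤ frobSq X := by
    rw [frobSq, Finset.sum_comm]
    calc (n : ℝ) * L = ∑ _t : Fin n, L := by simp [mul_comm]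
      _ ≤ ∑ t, ∑ i, (X i t) ^ 2 := Finset.sum_le_sum fun t _ => hSL t
  -- operator norm comparison
  set a := opNorm Arms with ha
  set x := opNorm X with hx
  have hann : 0 ≤ a := norm_nonneg _
  have hxnn : 0 ≤ x := norm_nonneg _
  have hop : x ≤ Real.sqrt (U / d) * a := by
    rw [hx, opNorm]
    apply ContinuousLinearMap.opNorm_le_bound
    · positivity
    intro v
    set w : EuclideanSpace ℝ (Fin n) :=
      (WithLp.equiv 2 (Fin n → ℝ)).symm (fun t => v t * Real.sqrt (S t) / Real.sqrt d) with hw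
    have hwapp : ∀ t, w t = v t * Real.sqrt (S t) / Real.sqrt d := fun t => rfl
    have heq : (LinearMap.toContinuousLinearMap (Matrix.toEuclideanLin X)) v
        = (LinearMap.toContinuousLinearMap (Matrix.toEuclideanLin Arms)) w := by
      ext i
      rw [euclid_apply, euclid_apply]
      apply Finset.sum_congr rfl
      intro t _
      rw [hArms, hwapp]
      have h1 : Real.sqrt (S t) ≠ 0 := (Real.sqrt_pos.mpr (hSpos t)).ne'
      have h2 : Real.sqrt d ≠ 0 := (Real.sqrt_pos.mpr hd).ne'
      rw [hSdef]
      have h3 : Real.sqrt (∑ x, X x t ^ 2) ≠ 0 := h1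
      field_simp
    have hwle : ‖w‖ ≤ Real.sqrt (U / d) * ‖v‖ := by
      rw [euclid_norm w, euclid_norm v, ← Real.sqrt_mul (by positivity) _]
      apply Real.sqrt_le_sqrt
      rw [Finset.mul_sum]
      apply Finset.sum_le_sum
      intro t _
      rw [hwapp, div_pow, mul_pow, Real.sq_sqrt (hSpos t).le, Real.sq_sqrt hd.le]
      rw [div_le_iff₀ hd]
      calc (v t) ^ 2 * S t ≤ (v t) ^ 2 * U := by
            exact mul_le_mul_of_nonneg_left (hSU t) (sq_nonneg _)
        _ = U / d * (v t) ^ 2 * d := by field_simp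
    calc ‖(LinearMap.toContinuousLinearMap (Matrix.toEuclideanLin X)) v‖
        = ‖(LinearMap.toContinuousLinearMap (Matrix.toEuclideanLin Arms)) w‖ := by rw [heq]
      _ ≤ a * ‖w‖ := ContinuousLinearMap.le_opNorm _ _
      _ ≤ a * (Real.sqrt (U / d) * ‖v‖) := mul_le_mul_of_nonneg_left hwle hann
      _ = Real.sqrt (U / d) * a * ‖v‖ := by ring
  -- opNorm X > 0
  have hxpos : 0 < x := by
    have hv : ‖EuclideanSpace.single t0 (1:ℝ)‖ = 1 := by
      simp [EuclideanSpace.norm_single]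
    have happ : ‖(LinearMap.toContinuousLinearMap (Matrix.toEuclideanLin X))
        (EuclideanSpace.single t0 (1:ℝ))‖ = Real.sqrt (S t0) := by
      rw [euclid_norm]
      congr 1
      rw [hSdef]
      apply Finset.sum_congr rfl
      intro i _
      rw [euclid_apply]
      simp [EuclideanSpace.single_apply]
    have hle := ContinuousLinearMap.le_opNorm
      (LinearMap.toContinuousLinearMap (Matrix.toEuclideanLin X)) (EuclideanSpace.single t0 (1:ℝ))
    rw [happ, hv, mul_one] at hle
    have : 0 < Real.sqrt (S t0) := Real.sqrt_pos.mpr (hSpos t0)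
    exact lt_of_lt_of_le this hle
  have hapos : 0 < a := by
    by_contra h
    push_neg at h
    have : a = 0 := le_antisymm h hann
    rw [this, mul_zero] at hop
    exact absurd (lt_of_lt_of_le hxpos hop) (lt_irrefl 0)
  -- square the operator norm bound
  have hx2 : (d : ℝ) * x ^ 2 ≤ U * a ^ 2 := by
    have h1 : x ^ 2 ≤ (Real.sqrt (U / d) * a) ^ 2 := by
      apply pow_le_pow_left₀ hxnn hop
    rw [mul_pow, Real.sq_sqrt (by positivity)] at h1
    rw [div_mul_eq_mul_div] at h1
    calc (d : ℝ) * x ^ 2 ≤ (d : ℝ) * (U * a ^ 2 / d) := by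
          exact mul_le_mul_of_nonneg_left h1 hd.le
      _ = U * a ^ 2 := by field_simp
  have hx2pos : 0 < x ^ 2 := by positivity
  have ha2pos : 0 < a ^ 2 := by positivity
  -- final computation
  have hFXnn : 0 ≤ frobSq X := le_trans (by positivity) hFrobX
  calc stRank Arms = (d : ℝ) * n / a ^ 2 := by rw [stRank, hFrobA]
    _ ≤ U * frobSq X / (L * x ^ 2) := by
        rw [div_le_div_iff₀ ha2pos (by positivity)]
        have key : ((n : ℝ) * L) * ((d : ℝ) * x ^ 2) ≤ frobSq X * (U * a ^ 2) :=
          mul_le_mul hFrobX hx2 (by positivity) hFXnn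
        linarith [key]
    _ = (U / L) * (frobSq X / x ^ 2) := by
        field_simp
    _ = (U / L) * stRank X := by rw [stRank]
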